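/- arXiv:1610.02362 — 2 statements merged into one kernel-verified Lean document; each statement's English description precedes it below -/
import Mathlib

section
/- Let M be a smooth manifold, (V, ∇) a smooth vector bundle with connection on M, and F ∈ Ω²(M, End V) its curvature. Then the even differential form Tr(exp(F)) = Σ_{k≥0} (1/k!) Tr(F^k) ∈ Ω^{even}(M) is closed: d Tr(exp(F)) = 0. -/
/-- The Chern character form `Tr(exp F) = Σₖ (1/k!) Tr(F^k)` is
closed.  Differential forms are modeled as an ℝ-algebra `A` with grading
involution `σ` and differential `d` satisfying the graded Leibniz rule and
`d∘d = 0`; End(V)-valued forms are matrices over `A`.  The curvature of the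
connection with (odd) local connection form `Am` is `F = d Am + Am ∧ Am`; it
is an even form so its entries commute with everything, and it is nilpotent
(`F^N = 0`, since forms of degree > dim M vanish).  Then
`d (Σ_{k<N} (1/k!) Tr(F^k)) = 0`. -/
theorem chern_character_form_closed {A : Type*} [Ring A] [Algebra ℝ A]
    (σ : A →ₐ[ℝ] A) (d : A →ₗ[ℝ] A)
    (hσσ : ∀ x, σ (σ x) = x)
    (hLeib : ∀ x y, d (x * y) = d x * y + σ x * d y)
    (hdd : ∀ x, d (d x) = 0)
    (hdσ : ∀ x, d (σ x) = - σ (d x))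
    {n : ℕ} (Am : Matrix (Fin n) (Fin n) A)
    (hodd : Am.map σ = -Am)
    (F : Matrix (Fin n) (Fin n) A)
    (hF : F = Am.map d + Am * Am)
    (hEven : ∀ i j (x : A), Commute (F i j) x)
    (N : ℕ) (hnil : F ^ N = 0) :
    d (∑ k ∈ Finset.range N, ((k.factorial : ℝ))⁻¹ • Matrix.trace (F ^ k)) = 0 := by
  classical
  -- d 1 = 0
  have hd1 : d 1 = 0 := by
    have h : d 1 = d 1 + d 1 := by simpa using hLeib 1 1
    exact (left_eq_add.mp h)
  -- entrywise odd-ness of Am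
  have hσAm : ∀ i j, σ (Am i j) = - Am i j := by
    intro i j
    have := congrFun (congrFun hodd i) j
    simpa [Matrix.map_apply] using this
  -- σ ∘ d = - d ∘ σ
  have hσd : ∀ x, σ (d x) = - d (σ x) := by
    intro x
    rw [eq_comm, neg_eq_iff_eq_neg, eq_comm]
    exact (hdσ x).symm
  -- matrix Leibniz rule
  have hmdmul : ∀ X Y : Matrix (Fin n) (Fin n) A,
      (X * Y).map d = X.map d * Y + X.map σ * Y.map d := by
    intro X Y
    ext i j
    simp only [Matrix.map_apply, Matrix.mul_apply, Matrix.add_apply, map_sum]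
    rw [← Finset.sum_add_distrib]
    exact Finset.sum_congr rfl fun l _ => hLeib _ _
  -- F is even: σ fixes its entries
  have hσF : F.map σ = F := by
    ext i j
    subst hF
    simp only [Matrix.map_apply, Matrix.add_apply, Matrix.mul_apply, map_add, map_sum, map_mul]
    congr 1
    · rw [hσd, hσAm, map_neg, neg_neg]
    · exact Finset.sum_congr rfl fun l _ => by rw [hσAm, hσAm, neg_mul_neg]
  -- Bianchi: (map d F) = F * Am - Am * F
  have hdF : F.map d = F * Am - Am * F := by
    have h1 : (Am.map d).map d = 0 := by
      ext i j; simp [Matrix.map_apply, hdd]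
    have h2 : (Am * Am).map d = Am.map d * Am - Am * Am.map d := by
      rw [hmdmul, hodd]; noncomm_ring
    have h3 : F.map d = Am.map d * Am - Am * Am.map d := by
      rw [hF]
      have : (Am.map d + Am * Am).map d = (Am.map d).map d + (Am * Am).map d := by
        ext i j; simp [Matrix.map_apply, Matrix.add_apply]
      rw [this, h1, h2, zero_add]
    have hA : Am.map d = F - Am * Am := by rw [hF]; noncomm_ring
    rw [h3, hA]; noncomm_ring
  -- entries of powers of F are central
  have hcent : ∀ k (i j : Fin n) (x : A), Commute ((F ^ k) i j) x := by
    intro k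
    induction k with
    | zero =>
      intro i j x
      simp only [pow_zero, Matrix.one_apply]
      by_cases h : i = j <;> simp [h]
    | succ k ih =>
      intro i j x
      rw [pow_succ]
      simp only [Matrix.mul_apply]
      exact Commute.sum_left _ _ _ fun l _ => Commute.mul_left (ih i l x) (hEven l j x)
  -- trace cyclicity when left factor has central entries
  have hcyc : ∀ (X Y : Matrix (Fin n) (Fin n) A),
      (∀ i j x, Commute (X i j) x) → (X * Y).trace = (Y * X).trace := by
    intro X Y hX
    simp only [Matrix.trace, Matrix.diag, Matrix.mul_apply]
    rw [Finset.sum_comm]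
    exact Finset.sum_congr rfl fun i _ => Finset.sum_congr rfl fun j _ => (hX j i _).eq
  -- d of trace
  have hdtr : ∀ X : Matrix (Fin n) (Fin n) A, d X.trace = (X.map d).trace := by
    intro X
    simp [Matrix.trace, Matrix.diag, map_sum, Matrix.map_apply]
  -- Tr (dF * F^j) = 0
  have h1 : ∀ j : ℕ, (F.map d * F ^ j).trace = 0 := by
    intro j
    rw [hdF, sub_mul, Matrix.trace_sub, mul_assoc,
      hcyc F (Am * F ^ j) hEven, mul_assoc, mul_assoc, ← pow_succ, ← pow_succ']
    exact sub_self _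
  -- main: Tr ((map d (F^k)) * F^m) = 0
  have main : ∀ k m : ℕ, ((F ^ k).map d * F ^ m).trace = 0 := by
    intro k
    induction k with
    | zero =>
      intro m
      have : (F ^ 0).map d = 0 := by
        ext i j
        simp only [pow_zero, Matrix.map_apply, Matrix.zero_apply]
        by_cases h : i = j <;> simp [Matrix.one_apply, h, hd1]
      rw [this, zero_mul, Matrix.trace_zero]
    | succ k ih =>
      intro m
      have hsplit : (F ^ (k + 1)).map d = F.map d * F ^ k + F * (F ^ k).map d := by
        rw [pow_succ', hmdmul, hσF]
      rw [hsplit, add_mul, Matrix.trace_add, mul_assoc, mul_assoc, ← pow_add,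
        hcyc F ((F ^ k).map d * F ^ m) hEven, mul_assoc, ← pow_succ]
      rw [h1 (k + m), ih (m + 1), add_zero]
  -- finish
  rw [map_sum]
  refine Finset.sum_eq_zero fun k _ => ?_
  rw [map_smul, hdtr]
  have : (F ^ k).map d = (F ^ k).map d * F ^ 0 := by rw [pow_zero, mul_one]
  rw [this, main k 0, smul_zero]
end

section
/- Let F = dθ ⊗ α + θ dθ ⊗ a be a 𝔤-valued connection 1-form on ℝ^{0|1} (α odd, a even elements with values in 𝔤). Then the gauge transformation by g = exp(−θα) transforms A = dθ⊗α + θdθ⊗a into A′ = Ad_g A + g^*Θ = θ dθ ⊗ a′ for some even a′ ∈ 𝔤; in particular, when α is such that all higher brackets vanish appropriately (e.g. in a matrix group, working modulo θ² = 0), A′ = θdθ ⊗ (a + ½[α,α]) has vanishing dθ⊗(odd) component. Hence every connection on a trivial G-bundle over ℝ^{0|1} is gauge equivalent to a constant one of the form θdθ⊗a′. -/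
/-- Every connection `A = dθ⊗α + θdθ⊗a` on the trivial `G`-bundle
over `ℝ^{0|1}` is gauge equivalent, via `g = exp(−θα) = 1 − θα`, to the constant
connection `θdθ⊗(a + ½[α,α]) = θdθ⊗(a + α²)`; in particular the `dθ⊗(odd)`
component of the transformed connection vanishes.  We work in an ambient
ℝ-algebra containing the odd coordinate `θ`, the even generator `dθ`, the odd
𝔤-valued parameter `α` and the even 𝔤-valued parameter `a`, with the
supercommutation relations among them, and `dg = d(1 − θα) = −dθ·α`. -/
theorem gauge_fixing_connection_on_superpoint
    {A : Type*} [Ring A] [Algebra ℝ A] (θ dθ α a : A)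
    (hθθ : θ * θ = 0)
    (hθdθ : θ * dθ = dθ * θ)
    (hαθ : α * θ = -(θ * α))
    (hαdθ : α * dθ = dθ * α)
    (hadθ : a * dθ = dθ * a)
    (haθ : a * θ = θ * a) :
    -- g = 1 − θα is invertible with inverse 1 + θα:
    ((1 - θ * α) * (1 + θ * α) = 1 ∧ (1 + θ * α) * (1 - θ * α) = 1)
    -- the gauge transformed connection g⁻¹ A g + g⁻¹ dg is constant:
    ∧ (1 + θ * α) * (dθ * α + θ * dθ * a) * (1 - θ * α)
        + (1 + θ * α) * (-(dθ * α))
      = θ * dθ * (a + α * α)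
    -- in particular it is of the form θdθ ⊗ a′:
    ∧ ∃ a' : A,
        (1 + θ * α) * (dθ * α + θ * dθ * a) * (1 - θ * α)
          + (1 + θ * α) * (-(dθ * α))
        = θ * dθ * a' := by
  have h1 : ∀ x : A, α * (θ * x) = -(θ * (α * x)) := by
    intro x; rw [← mul_assoc, hαθ, neg_mul, mul_assoc]
  have h2 : ∀ x : A, α * (dθ * x) = dθ * (α * x) := by
    intro x; rw [← mul_assoc, hαdθ, mul_assoc]
  have h3 : ∀ x : A, a * (dθ * x) = dθ * (a * x) := by
    intro x; rw [← mul_assoc, hadθ, mul_assoc]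
  have h4 : ∀ x : A, a * (θ * x) = θ * (a * x) := by
    intro x; rw [← mul_assoc, haθ, mul_assoc]
  have h5 : ∀ x : A, dθ * (θ * x) = θ * (dθ * x) := by
    intro x; rw [← mul_assoc, ← hθdθ, mul_assoc]
  have h6 : ∀ x : A, θ * (θ * x) = 0 := by
    intro x; rw [← mul_assoc, hθθ, zero_mul]
  have key : (1 + θ * α) * (dθ * α + θ * dθ * a) * (1 - θ * α)
        + (1 + θ * α) * (-(dθ * α))
      = θ * dθ * (a + α * α) := by
    simp only [mul_assoc, h1, h2, h3, h4, h5, h6, hθθ, hαθ, hαdθ, hadθ, haθ,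
      mul_neg, neg_neg, mul_zero, neg_zero, zero_mul, mul_one, mul_add, add_mul]
    simp only [mul_sub, sub_mul, mul_one, one_mul, mul_add, add_mul, add_zero, zero_add,
      mul_assoc, h1, h2, h3, h4, h5, h6, mul_neg, neg_neg, mul_zero, neg_zero, sub_zero]
    noncomm_ring
  have hinv : ∀ x y : A, x = θ * α ∨ x = -(θ * α) → (1 + x) * (1 - x) = 1 := by
    intro x y h
    have hx : x * x = 0 := by
      rcases h with h | h <;> subst h <;>
        simp [mul_assoc, h1, h6, mul_neg, neg_mul, neg_neg]
    have : (1 + x) * (1 - x) = 1 + x - x - x * x := by noncomm_ring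
    rw [this, hx]; noncomm_ring
  refine ⟨⟨?_, ?_⟩, key, ⟨a + α * α, key⟩⟩
  · have := hinv (-(θ * α)) 0 (Or.inr rfl)
    have e : (1 : A) + -(θ * α) = 1 - θ * α := by noncomm_ring
    have e2 : (1 : A) - -(θ * α) = 1 + θ * α := by noncomm_ring
    rw [e, e2] at this; exact this
  · exact hinv (θ * α) 0 (Or.inl rfl)
end
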